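/- Let 0 < r ≤ π/2 and let γ : [0, π·sin r] → ℝ^{n+1} be a C² curve lying on the unit sphere (‖γ(t)‖ = 1 for all t), parametrized by arc length (‖γ'(t)‖ = 1 for all t), whose spherical geodesic curvature satisfies ‖γ''(t) + γ(t)‖ ≤ cot r for all t. Then the spherical distance between the endpoints is at least 2r; equivalently, ⟨γ(0), γ(π·sin r)⟩ ≤ cos(2r), where ⟨·,·⟩ is the Euclidean inner product. -/

import Mathlib

open Real Set Filter Topology RealInnerProductSpace

lemma nonneg_left_lim {g : ℝ → ℝ} {a t₁ : ℝ} (hat : a < t₁)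
    (hc : ContinuousWithinAt g (Icc a t₁) t₁)
    (hge : ∀ t ∈ Ico a t₁, 0 ≤ g t) : 0 ≤ g t₁ := by
  have hne : (𝓝[Ico a t₁] t₁).NeBot := by
    rw [nhdsWithin_Ico_eq_nhdsLT hat]; infer_instance
  exact ge_of_tendsto (hc.mono Ico_subset_Icc_self) (eventually_nhdsWithin_of_forall hge)

lemma deriv_nonpos_left {g : ℝ → ℝ} {g' a t₁ : ℝ} (hat : a < t₁)
    (hd : HasDerivWithinAt g g' (Icc a t₁) t₁)
    (h0 : g t₁ = 0) (hge : ∀ t ∈ Ico a t₁, 0 ≤ g t) : g' ≤ 0 := by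
  have hset : Icc a t₁ \ {t₁} = Ico a t₁ := by
    ext x
    simp only [mem_diff, mem_Icc, mem_Ico, mem_singleton_iff]
    constructor
    · rintro ⟨⟨h1, h2⟩, h3⟩; exact ⟨h1, lt_of_le_of_ne h2 h3⟩
    · rintro ⟨h1, h2⟩; exact ⟨⟨h1, h2.le⟩, h2.ne⟩
  rw [hasDerivWithinAt_iff_tendsto_slope, hset] at hd
  have hne : (𝓝[Ico a t₁] t₁).NeBot := by
    rw [nhdsWithin_Ico_eq_nhdsLT hat]; infer_instance
  refine le_of_tendsto hd (eventually_nhdsWithin_of_forall ?_)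
  intro t ht
  have h1 := hge t ht
  have hlt : t - t₁ < 0 := sub_neg.2 ht.2
  have : slope g t₁ t = (g t - g t₁) / (t - t₁) := slope_def_field g t₁ t
  rw [this, h0, sub_zero]
  exact div_nonpos_of_nonneg_of_nonpos h1 hlt.le

set_option maxHeartbeats 1000000 in
lemma sqrt_gronwall {P P' : ℝ → ℝ} {a b K : ℝ} (hK : 0 < K)
    (hderiv : ∀ t ∈ Icc a b, HasDerivWithinAt P (P' t) (Icc a b) t)
    (hPa : P a = 1)
    (hbound : ∀ t ∈ Icc a b, (P' t) ^ 2 ≤ K ^ 2 * (1 - (P t) ^ 2)) :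
    ∀ t ∈ Icc a b, 1 - P t ≤ K ^ 2 * (t - a) ^ 2 / 2 := by
  intro t ht
  have hPcont : ContinuousOn P (Icc a b) := fun s hs => (hderiv s hs).continuousWithinAt
  have key : ∀ ε > (0:ℝ), 1 - P t ≤ ((K * Real.sqrt 2 + ε) * (t - a) / 2 + ε) ^ 2 := by
    intro ε hε
    by_contra hcon
    push_neg at hcon
    set C : ℝ := K * Real.sqrt 2 + ε with hC
    clear_value C
    have hCpos : 0 < C := by
      have : 0 ≤ K * Real.sqrt 2 := by positivity
      linarith
    set g : ℝ → ℝ := fun s => (C * (s - a) / 2 + ε) ^ 2 - (1 - P s) with hgdef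
    have hgs : ∀ s, g s = (C * (s - a) / 2 + ε) ^ 2 - (1 - P s) := fun s => rfl
    clear_value g
    have hgc : ContinuousOn g (Icc a t) := by
      rw [hgdef]
      apply ContinuousOn.sub
      · fun_prop
      · exact continuousOn_const.sub (hPcont.mono (Icc_subset_Icc le_rfl ht.2))
    set U : Set ℝ := Icc a t ∩ g ⁻¹' (Iic 0) with hU
    have hUclosed : IsClosed U := hgc.preimage_isClosed_of_isClosed isClosed_Icc isClosed_Iic
    have htU : t ∈ U := by
      refine ⟨⟨ht.1, le_rfl⟩, ?_⟩
      have : g t ≤ 0 := by rw [hgs]; linarith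
      exact this
    have hUne : U.Nonempty := ⟨t, htU⟩
    have hUbdd : BddBelow U := ⟨a, fun s hs => hs.1.1⟩
    set t₁ : ℝ := sInf U with ht₁
    have ht₁U : t₁ ∈ U := hUclosed.csInf_mem hUne hUbdd
    have ht₁le : g t₁ ≤ 0 := ht₁U.2
    have ht₁ab : t₁ ∈ Icc a b := ⟨ht₁U.1.1, le_trans ht₁U.1.2 ht.2⟩
    have hat₁ : a < t₁ := by
      rcases lt_or_eq_of_le ht₁U.1.1 with h | h
      · exact h
      · exfalso
        rw [← h, hgs, hPa] at ht₁le
        nlinarith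
    have hge : ∀ s ∈ Ico a t₁, 0 ≤ g s := by
      intro s hs
      by_contra hneg
      push_neg at hneg
      have hsU : s ∈ U := ⟨⟨hs.1, le_trans hs.2.le ht₁U.1.2⟩, le_of_lt hneg⟩
      exact absurd (csInf_le hUbdd hsU) (not_le.2 hs.2)
    have hg0 : g t₁ = 0 := by
      refine le_antisymm ht₁le (nonneg_left_lim hat₁ ?_ hge)
      exact (hgc.mono (Icc_subset_Icc le_rfl ht₁U.1.2)) t₁ ⟨ht₁U.1.1, le_rfl⟩
    -- derivative of g at t₁ within Icc a t₁
    have hu : HasDerivAt (fun s => C * (s - a) / 2 + ε) (C / 2) t₁ := by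
      have h1 : HasDerivAt (fun s : ℝ => s - a) 1 t₁ := (hasDerivAt_id t₁).sub_const a
      have h2 := ((h1.const_mul C).div_const 2).add_const ε
      exact h2.congr_deriv (by ring)
    have hφd : HasDerivAt (fun s => (C * (s - a) / 2 + ε) ^ 2)
        (C * (C * (t₁ - a) / 2 + ε)) t₁ := by
      have h2 := hu.pow 2
      exact h2.congr_deriv (by ring)
    have hPd : HasDerivWithinAt P (P' t₁) (Icc a t₁) t₁ :=
      (hderiv t₁ ht₁ab).mono (Icc_subset_Icc le_rfl (le_trans ht₁U.1.2 ht.2))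
    have hgd : HasDerivWithinAt g (C * (C * (t₁ - a) / 2 + ε) + P' t₁) (Icc a t₁) t₁ := by
      have h3 := hφd.hasDerivWithinAt.sub
        ((hasDerivWithinAt_const t₁ (Icc a t₁) (1:ℝ)).sub hPd)
      have h4 : HasDerivWithinAt (fun s => (C * (s - a) / 2 + ε) ^ 2 - (1 - P s))
          (C * (C * (t₁ - a) / 2 + ε) + P' t₁) (Icc a t₁) t₁ := by
        exact h3.congr_deriv (by ring)
      exact h4.congr (fun y _ => hgs y) (hgs t₁)
    have hslope : C * (C * (t₁ - a) / 2 + ε) + P' t₁ ≤ 0 :=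
      deriv_nonpos_left hat₁ hgd hg0 hge
    -- contradiction
    have hupos : 0 < C * (t₁ - a) / 2 + ε := by
      have h4 : 0 ≤ C * (t₁ - a) / 2 :=
        div_nonneg (mul_nonneg hCpos.le (by linarith)) (by norm_num)
      linarith
    set u : ℝ := C * (t₁ - a) / 2 + ε with hu'
    clear_value u
    have hb := hbound t₁ ht₁ab
    have hPsq : 0 ≤ 1 - P t₁ ^ 2 :=
      (mul_nonneg_iff_of_pos_left (pow_pos hK 2)).mp (le_trans (sq_nonneg _) hb)
    have hPle : P t₁ ≤ 1 := by nlinarith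
    have heq : 1 - P t₁ = u ^ 2 := by rw [hgs] at hg0; rw [hu']; linarith
    have hP'le : P' t₁ ≤ -(C * u) := by linarith
    have hP'sq : (C * u) ^ 2 ≤ (P' t₁) ^ 2 := by
      have h5 : (C * u) ^ 2 ≤ (-(P' t₁)) ^ 2 :=
        pow_le_pow_left₀ (mul_nonneg hCpos.le hupos.le) (by linarith) 2
      simpa using h5
    have hsq2 : Real.sqrt 2 ^ 2 = 2 := Real.sq_sqrt (by norm_num)
    have hC2 : 2 * K ^ 2 ≤ C ^ 2 := by
      rw [hC]
      nlinarith [hsq2, mul_nonneg (mul_nonneg hK.le (Real.sqrt_nonneg 2)) hε.le, sq_nonneg ε]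
    -- chain : 2K²u² ≤ C²u² ≤ P'² ≤ K²(1-P²) = K²u²(2-u²)
    have hfin : K ^ 2 * (1 - P t₁ ^ 2) = K ^ 2 * u ^ 2 * (2 - u ^ 2) := by
      have : P t₁ = 1 - u ^ 2 := by linarith
      rw [this]; ring
    have h6 : C ^ 2 * u ^ 2 ≤ K ^ 2 * u ^ 2 * (2 - u ^ 2) := by
      calc C ^ 2 * u ^ 2 = (C * u) ^ 2 := by ring
        _ ≤ (P' t₁) ^ 2 := hP'sq
        _ ≤ K ^ 2 * (1 - P t₁ ^ 2) := hb
        _ = K ^ 2 * u ^ 2 * (2 - u ^ 2) := hfin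
    have h7 : 2 * K ^ 2 * u ^ 2 ≤ C ^ 2 * u ^ 2 := by
      have := mul_le_mul_of_nonneg_right hC2 (sq_nonneg u)
      linarith
    have h9 : 0 < K ^ 2 * u ^ 2 * u ^ 2 := by positivity
    nlinarith [h6, h7, h9]
  -- limit ε → 0⁺
  have hcont : Continuous (fun ε : ℝ => ((K * Real.sqrt 2 + ε) * (t - a) / 2 + ε) ^ 2) := by
    fun_prop
  have htend : Tendsto (fun ε : ℝ => ((K * Real.sqrt 2 + ε) * (t - a) / 2 + ε) ^ 2)
      (𝓝[>] (0:ℝ)) (𝓝 (((K * Real.sqrt 2 + 0) * (t - a) / 2 + 0) ^ 2)) :=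
    (hcont.tendsto 0).mono_left nhdsWithin_le_nhds
  have hle := ge_of_tendsto htend (eventually_nhdsWithin_of_forall (fun ε hε => key ε hε))
  have hsq2 : Real.sqrt 2 ^ 2 = 2 := Real.sq_sqrt (by norm_num)
  nlinarith [hle, hsq2]

set_option maxHeartbeats 2000000 in
lemma cos_comparison {P P' : ℝ → ℝ} {a b K : ℝ} (hK : 0 < K)
    (hderiv : ∀ t ∈ Icc a b, HasDerivWithinAt P (P' t) (Icc a b) t)
    (hPa : P a = 1)
    (hbound : ∀ t ∈ Icc a b, (P' t) ^ 2 ≤ K ^ 2 * (1 - (P t) ^ 2))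
    (hL : K * (b - a) ≤ π / 2) :
    ∀ t ∈ Icc a b, Real.cos (K * (t - a)) ≤ P t := by
  have hPcont : ContinuousOn P (Icc a b) := fun s hs => (hderiv s hs).continuousWithinAt
  have hA := sqrt_gronwall hK hderiv hPa hbound
  intro t ht
  -- main claim for K' ∈ (K, 2K)
  have main : ∀ K' : ℝ, K < K' → K' < 2 * K → ∀ s ∈ Icc a b, Real.cos (K' * (s - a)) ≤ P s := by
    intro K' hKK' hK2 
    by_contra hcon
    push_neg at hcon
    obtain ⟨t₀, ht₀, hct₀⟩ := hcon
    have hK'pos : 0 < K' := lt_trans hK hKK'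
    obtain ⟨δ, hδpos, hδK', hδsq⟩ :
        ∃ δ : ℝ, 0 < δ ∧ δ * K' ≤ 1 ∧ δ ^ 2 * (5 * K' ^ 4) ≤ (K' ^ 2 - K ^ 2) * 48 := by
      refine ⟨min (1 / K') (Real.sqrt ((K' ^ 2 - K ^ 2) * 48 / (5 * K' ^ 4))), ?_, ?_, ?_⟩
      · apply lt_min
        · positivity
        · apply Real.sqrt_pos.mpr
          have h1 : 0 < K' ^ 2 - K ^ 2 := by nlinarith
          positivity
      · have h1 : min (1 / K') (Real.sqrt ((K' ^ 2 - K ^ 2) * 48 / (5 * K' ^ 4))) ≤ 1 / K' :=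
          min_le_left _ _
        rw [← le_div_iff₀ hK'pos]
        exact h1
      · have h1 : min (1 / K') (Real.sqrt ((K' ^ 2 - K ^ 2) * 48 / (5 * K' ^ 4))) ≤
            Real.sqrt ((K' ^ 2 - K ^ 2) * 48 / (5 * K' ^ 4)) := min_le_right _ _
        have h0 : 0 ≤ min (1 / K') (Real.sqrt ((K' ^ 2 - K ^ 2) * 48 / (5 * K' ^ 4))) := by
          apply le_min
          · positivity
          · exact Real.sqrt_nonneg _
        have h2 : 0 ≤ (K' ^ 2 - K ^ 2) * 48 / (5 * K' ^ 4) := by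
          have : 0 < K' ^ 2 - K ^ 2 := by nlinarith
          positivity
        have h3 : (min (1 / K') (Real.sqrt ((K' ^ 2 - K ^ 2) * 48 / (5 * K' ^ 4)))) ^ 2 ≤
            (K' ^ 2 - K ^ 2) * 48 / (5 * K' ^ 4) := by
          nlinarith [Real.sq_sqrt h2, h1, h0, Real.sqrt_nonneg ((K' ^ 2 - K ^ 2) * 48 / (5 * K' ^ 4))]
        rw [div_eq_mul_inv] at h3
        have h4 : 0 < 5 * K' ^ 4 := by positivity
        calc (min (1 / K') (Real.sqrt ((K' ^ 2 - K ^ 2) * 48 / (5 * K' ^ 4)))) ^ 2 * (5 * K' ^ 4)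
            ≤ (K' ^ 2 - K ^ 2) * 48 * (5 * K' ^ 4)⁻¹ * (5 * K' ^ 4) := by
              exact mul_le_mul_of_nonneg_right h3 h4.le
          _ = (K' ^ 2 - K ^ 2) * 48 := by field_simp
    -- near a : P s ≥ cos (K'(s-a)) for s - a ≤ δ
    have claim0 : ∀ s ∈ Icc a b, s - a ≤ δ → Real.cos (K' * (s - a)) ≤ P s := by
      intro s hs hsδ
      have hτ0 : 0 ≤ s - a := by linarith [hs.1]
      have habs : |K' * (s - a)| ≤ 1 := by
        rw [abs_of_nonneg (by positivity)]
        calc K' * (s - a) ≤ K' * δ := by nlinarith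
          _ = δ * K' := by ring
          _ ≤ 1 := hδK'
      have hcb := Real.cos_bound habs
      have hPs := hA s hs
      have h3 : Real.cos (K' * (s - a)) ≤
          1 - (K' * (s - a)) ^ 2 / 2 + |K' * (s - a)| ^ 4 * (5 / 96) := by
        have := abs_le.1 hcb
        linarith [this.2]
      have h4 : |K' * (s - a)| ^ 4 = K' ^ 4 * (s - a) ^ 4 := by
        rw [abs_of_nonneg (by positivity)]; ring
      have h5 : K' ^ 4 * (s - a) ^ 4 * (5 / 96) ≤ (K' ^ 2 - K ^ 2) * (s - a) ^ 2 / 2 := by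
        have hτδ : (s - a) ^ 2 ≤ δ ^ 2 := by nlinarith
        have h6 : (s - a) ^ 2 * (5 * K' ^ 4) ≤ (K' ^ 2 - K ^ 2) * 48 := by
          calc (s - a) ^ 2 * (5 * K' ^ 4) ≤ δ ^ 2 * (5 * K' ^ 4) := by
                apply mul_le_mul_of_nonneg_right hτδ (by positivity)
            _ ≤ (K' ^ 2 - K ^ 2) * 48 := hδsq
        nlinarith [h6, sq_nonneg (s - a), sq_nonneg ((s - a) * (s - a))]
      calc Real.cos (K' * (s - a))
          ≤ 1 - (K' * (s - a)) ^ 2 / 2 + |K' * (s - a)| ^ 4 * (5 / 96) := h3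
        _ ≤ 1 - K ^ 2 * (s - a) ^ 2 / 2 := by rw [h4]; nlinarith [h5]
        _ ≤ P s := by linarith [hPs]
    -- t₀ - a > δ
    have ht₀δ : a + δ < t₀ := by
      by_contra hle
      push_neg at hle
      exact absurd (claim0 t₀ ht₀ (by linarith)) (not_le.2 hct₀)
    set g : ℝ → ℝ := fun s => P s - Real.cos (K' * (s - a)) with hgdef
    have hgs : ∀ s, g s = P s - Real.cos (K' * (s - a)) := fun s => rfl
    clear_value g
    have hgc : ContinuousOn g (Icc a b) := by
      rw [hgdef]; exact hPcont.sub (by fun_prop)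
    set U : Set ℝ := Icc (a + δ) b ∩ g ⁻¹' (Iic 0) with hU
    have hUclosed : IsClosed U :=
      (hgc.mono (Icc_subset_Icc (by linarith) le_rfl)).preimage_isClosed_of_isClosed
        isClosed_Icc isClosed_Iic
    have ht₀U : t₀ ∈ U := by
      refine ⟨⟨ht₀δ.le, ht₀.2⟩, ?_⟩
      have : g t₀ ≤ 0 := by rw [hgs]; linarith
      exact this
    have hUne : U.Nonempty := ⟨t₀, ht₀U⟩
    have hUbdd : BddBelow U := ⟨a + δ, fun s hs => hs.1.1⟩
    set t₁ : ℝ := sInf U with ht₁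
    have ht₁U : t₁ ∈ U := hUclosed.csInf_mem hUne hUbdd
    have ht₁le : g t₁ ≤ 0 := ht₁U.2
    have ht₁ab : t₁ ∈ Icc a b := ⟨by linarith [ht₁U.1.1], ht₁U.1.2⟩
    have hat₁ : a < t₁ := by linarith [ht₁U.1.1]
    have hge : ∀ s ∈ Ico a t₁, 0 ≤ g s := by
      intro s hs
      rcases le_or_gt (s - a) δ with h | h
      · have := claim0 s ⟨hs.1, le_trans hs.2.le ht₁ab.2⟩ h
        rw [hgs]; linarith
      · by_contra hneg
        push_neg at hneg
        have hsU : s ∈ U := ⟨⟨by linarith, le_trans hs.2.le ht₁ab.2⟩, le_of_lt hneg⟩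
        exact absurd (csInf_le hUbdd hsU) (not_le.2 hs.2)
    have hg0 : g t₁ = 0 := by
      refine le_antisymm ht₁le (nonneg_left_lim hat₁ ?_ hge)
      exact (hgc.mono (Icc_subset_Icc le_rfl ht₁ab.2)) t₁ ⟨hat₁.le, le_rfl⟩
    -- derivative
    have hcosd : HasDerivAt (fun s => Real.cos (K' * (s - a)))
        (-Real.sin (K' * (t₁ - a)) * K') t₁ := by
      have h1 : HasDerivAt (fun s : ℝ => K' * (s - a)) K' t₁ := by
        have := ((hasDerivAt_id t₁).sub_const a).const_mul K'
        simpa using this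
      exact (Real.hasDerivAt_cos (K' * (t₁ - a))).comp t₁ h1
    have hPd : HasDerivWithinAt P (P' t₁) (Icc a t₁) t₁ :=
      (hderiv t₁ ht₁ab).mono (Icc_subset_Icc le_rfl ht₁ab.2)
    have hgd : HasDerivWithinAt g (P' t₁ + Real.sin (K' * (t₁ - a)) * K') (Icc a t₁) t₁ := by
      have h3 := hPd.sub hcosd.hasDerivWithinAt
      have h4 : HasDerivWithinAt (fun s => P s - Real.cos (K' * (s - a)))
          (P' t₁ + Real.sin (K' * (t₁ - a)) * K') (Icc a t₁) t₁ := by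
        exact h3.congr_deriv (by ring)
      exact h4.congr (fun y _ => hgs y) (hgs t₁)
    have hslope : P' t₁ + Real.sin (K' * (t₁ - a)) * K' ≤ 0 :=
      deriv_nonpos_left hat₁ hgd hg0 hge
    -- contradiction
    set θ : ℝ := K' * (t₁ - a) with hθ
    clear_value θ
    have hθpos : 0 < θ := by rw [hθ]; nlinarith [hat₁]
    have hθlt : θ < π := by
      rw [hθ]
      have h1 : K' * (t₁ - a) ≤ K' * (b - a) := by nlinarith [ht₁ab.2]
      have h2 : K' * (b - a) < 2 * K * (b - a) := by nlinarith [hat₁, ht₁ab.2]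
      have h3 : 2 * K * (b - a) ≤ π := by linarith [hL]
      linarith
    have hsinpos : 0 < Real.sin θ := Real.sin_pos_of_pos_of_lt_pi hθpos hθlt
    have hPcos : P t₁ = Real.cos θ := by
      rw [hgs] at hg0; rw [hθ]; linarith
    have hb2 := hbound t₁ ht₁ab
    have hsc := Real.sin_sq_add_cos_sq θ
    have hP'le : P' t₁ ≤ -(Real.sin θ * K') := by rw [hθ] at hslope ⊢; linarith
    have hP'sq : (Real.sin θ * K') ^ 2 ≤ (P' t₁) ^ 2 := by
      have h5 : (Real.sin θ * K') ^ 2 ≤ (-(P' t₁)) ^ 2 :=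
        pow_le_pow_left₀ (by positivity) (by linarith) 2
      simpa using h5
    rw [hPcos] at hb2
    -- P'² ≤ K²(1-cos²θ) = K² sin²θ  but P'² ≥ K'² sin²θ
    have hb3 : P' t₁ ^ 2 ≤ K ^ 2 * Real.sin θ ^ 2 := by nlinarith [hb2, hsc]
    have hKsq : K ^ 2 < K' ^ 2 := by nlinarith
    nlinarith [hb3, hP'sq, mul_pos hsinpos hsinpos, hKsq]
  -- limit K' → K⁺
  have hmem : Ioo K (2 * K) ∈ 𝓝[>] K := Ioo_mem_nhdsGT_of_mem ⟨le_rfl, by linarith⟩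
  have htend : Tendsto (fun K' : ℝ => Real.cos (K' * (t - a))) (𝓝[>] K)
      (𝓝 (Real.cos (K * (t - a)))) := by
    apply Tendsto.mono_left _ nhdsWithin_le_nhds
    exact (Real.continuous_cos.comp (continuous_id.mul continuous_const)).tendsto K
  refine le_of_tendsto htend ?_
  filter_upwards [hmem] with K' hK'
  exact main K' hK'.1 hK'.2 t ht

lemma hasDerivWithin_eq_zero_of_const {F : ℝ → ℝ} {F' : ℝ → ℝ} {c : ℝ} {s : Set ℝ}
    (hs : UniqueDiffOn ℝ s) (hd : ∀ x ∈ s, HasDerivWithinAt F (F' x) s x)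
    (hc : ∀ x ∈ s, F x = c) : ∀ x ∈ s, F' x = 0 := by
  intro x hx
  have h1 : HasDerivWithinAt (fun _ : ℝ => c) (F' x) s x :=
    (hd x hx).congr (fun y hy => (hc y hy).symm) ((hc x hx).symm)
  have h2 := h1.derivWithin (hs x hx)
  have h3 := (hasDerivWithinAt_const x s c).derivWithin (hs x hx)
  exact h2.symm.trans h3

set_option maxHeartbeats 1000000 in
theorem bow_lemma_spherical {n : ℕ} (r : ℝ) (hr : 0 < r) (hr' : r ≤ π / 2)
    (γ : ℝ → EuclideanSpace ℝ (Fin (n + 1)))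
    (hγ : ContDiffOn ℝ 2 γ (Icc 0 (π * Real.sin r)))
    (hsphere : ∀ t ∈ Icc 0 (π * Real.sin r), ‖γ t‖ = 1)
    (hspeed : ∀ t ∈ Icc 0 (π * Real.sin r),
      ‖derivWithin γ (Icc 0 (π * Real.sin r)) t‖ = 1)
    (hcurv : ∀ t ∈ Icc 0 (π * Real.sin r),
      ‖derivWithin (derivWithin γ (Icc 0 (π * Real.sin r))) (Icc 0 (π * Real.sin r)) t
        + γ t‖ ≤ Real.cot r) :
    (inner ℝ (γ 0) (γ (π * Real.sin r)) : ℝ) ≤ Real.cos (2 * r) := by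
  have hπ := Real.pi_pos
  have hsin : 0 < Real.sin r :=
    Real.sin_pos_of_pos_of_lt_pi hr (lt_of_le_of_lt hr' (by linarith))
  set T : ℝ := π * Real.sin r with hT
  have hTpos : 0 < T := by positivity
  have hI : UniqueDiffOn ℝ (Icc 0 T) := uniqueDiffOn_Icc hTpos
  set g1 : ℝ → EuclideanSpace ℝ (Fin (n + 1)) := derivWithin γ (Icc 0 T) with hg1def
  set g2 : ℝ → EuclideanSpace ℝ (Fin (n + 1)) := derivWithin g1 (Icc 0 T) with hg2def
  have hγdiff : DifferentiableOn ℝ γ (Icc 0 T) := hγ.differentiableOn (by norm_num)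
  have hd1 : ∀ t ∈ Icc 0 T, HasDerivWithinAt γ (g1 t) (Icc 0 T) t :=
    fun t ht => (hγdiff t ht).hasDerivWithinAt
  have hγ1 : ContDiffOn ℝ 1 g1 (Icc 0 T) := hγ.derivWithin hI (by norm_num)
  have hd2 : ∀ t ∈ Icc 0 T, HasDerivWithinAt g1 (g2 t) (Icc 0 T) t :=
    fun t ht => ((hγ1.differentiableOn one_ne_zero) t ht).hasDerivWithinAt
  -- orthogonality relations
  have o1 : ∀ t ∈ Icc 0 T, ⟪γ t, g1 t⟫ = 0 := by
    have hz := hasDerivWithin_eq_zero_of_const (F := fun t => ⟪γ t, γ t⟫)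
      (F' := fun t => ⟪γ t, g1 t⟫ + ⟪g1 t, γ t⟫) (c := 1) hI
      (fun t ht => (hd1 t ht).inner ℝ (hd1 t ht))
      (fun t ht => show ⟪γ t, γ t⟫ = (1:ℝ) by
        rw [real_inner_self_eq_norm_sq, hsphere t ht]; norm_num)
    intro t ht
    have h9 : ⟪γ t, g1 t⟫ + ⟪g1 t, γ t⟫ = (0:ℝ) := hz t ht
    have h8 : ⟪g1 t, γ t⟫ = ⟪γ t, g1 t⟫ := real_inner_comm _ _
    linarith
  have o2 : ∀ t ∈ Icc 0 T, ⟪g1 t, g1 t⟫ = 1 := by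
    intro t ht
    rw [real_inner_self_eq_norm_sq, hspeed t ht]; norm_num
  have o3 : ∀ t ∈ Icc 0 T, ⟪g1 t, g2 t⟫ = 0 := by
    have hz := hasDerivWithin_eq_zero_of_const (F := fun t => ⟪g1 t, g1 t⟫)
      (F' := fun t => ⟪g1 t, g2 t⟫ + ⟪g2 t, g1 t⟫) (c := 1) hI
      (fun t ht => (hd2 t ht).inner ℝ (hd2 t ht)) o2
    intro t ht
    have h9 : ⟪g1 t, g2 t⟫ + ⟪g2 t, g1 t⟫ = (0:ℝ) := hz t ht
    have h8 : ⟪g2 t, g1 t⟫ = ⟪g1 t, g2 t⟫ := real_inner_comm _ _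
    linarith
  have o4 : ∀ t ∈ Icc 0 T, ⟪γ t, g2 t⟫ = -1 := by
    have hz := hasDerivWithin_eq_zero_of_const (F := fun t => ⟪γ t, g1 t⟫)
      (F' := fun t => ⟪γ t, g2 t⟫ + ⟪g1 t, g1 t⟫) (c := 0) hI
      (fun t ht => (hd1 t ht).inner ℝ (hd2 t ht)) o1
    intro t ht
    have h1 : ⟪γ t, g2 t⟫ + ⟪g1 t, g1 t⟫ = (0:ℝ) := hz t ht
    have h2 := o2 t ht
    linarith
  -- curvature bound in the ambient space
  set K : ℝ := (Real.sin r)⁻¹ with hK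
  have hKpos : 0 < K := by positivity
  have hcot0 : 0 ≤ Real.cot r := by
    rw [Real.cot_eq_cos_div_sin]
    have hcos : 0 ≤ Real.cos r := Real.cos_nonneg_of_mem_Icc ⟨by linarith, hr'⟩
    positivity
  have hcotK : Real.cot r ^ 2 + 1 = K ^ 2 := by
    rw [hK, Real.cot_eq_cos_div_sin]
    field_simp
    exact Real.cos_sq_add_sin_sq r
  have hnorm2 : ∀ t ∈ Icc 0 T, ‖g2 t‖ ^ 2 ≤ K ^ 2 := by
    intro t ht
    have h1 : ‖g2 t + γ t‖ ^ 2 = ‖g2 t‖ ^ 2 + 2 * ⟪g2 t, γ t⟫ + ‖γ t‖ ^ 2 :=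
      norm_add_sq_real (g2 t) (γ t)
    have h2 : ⟪g2 t, γ t⟫ = -1 := by rw [real_inner_comm]; exact o4 t ht
    have h3 : ‖γ t‖ = 1 := hsphere t ht
    have h4 : ‖g2 t + γ t‖ ^ 2 ≤ Real.cot r ^ 2 :=
      pow_le_pow_left₀ (norm_nonneg _) (hcurv t ht) 2
    rw [h2, h3] at h1
    nlinarith [hcotK]
  -- the comparison function
  set t₀ : ℝ := T / 2 with ht₀
  have ht₀I : t₀ ∈ Icc 0 T := ⟨by linarith, by linarith⟩
  set e : EuclideanSpace ℝ (Fin (n + 1)) := g1 t₀ with he'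
  have he : ‖e‖ = 1 := hspeed t₀ ht₀I
  set P : ℝ → ℝ := fun t => ⟪g1 t, e⟫ with hPdef
  set P' : ℝ → ℝ := fun t => ⟪g2 t, e⟫ with hP'def
  have hPs : ∀ t, P t = ⟪g1 t, e⟫ := fun t => rfl
  have hP's : ∀ t, P' t = ⟪g2 t, e⟫ := fun t => rfl
  have hPd : ∀ t ∈ Icc 0 T, HasDerivWithinAt P (P' t) (Icc 0 T) t := by
    intro t ht
    have h1 := (hd1 t ht).inner ℝ (hd2 t ht)
    have h2 := (hd2 t ht).inner ℝ (hasDerivWithinAt_const t (Icc 0 T) e)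
    simpa using h2
  have hPbound : ∀ t ∈ Icc 0 T, (P' t) ^ 2 ≤ K ^ 2 * (1 - (P t) ^ 2) := by
    intro t ht
    set w : EuclideanSpace ℝ (Fin (n + 1)) := e - ⟪g1 t, e⟫ • g1 t with hw
    have h1 : ⟪g2 t, w⟫ = P' t := by
      rw [hw, inner_sub_right, real_inner_smul_right]
      have h8 : ⟪g2 t, g1 t⟫ = (0:ℝ) := by
        rw [real_inner_comm]; exact o3 t ht
      rw [h8, hP's]
      ring
    have h2 : ‖w‖ ^ 2 = 1 - (P t) ^ 2 := by
      have hn := norm_sub_sq_real e (⟪g1 t, e⟫ • g1 t)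
      have hsm : ⟪e, ⟪g1 t, e⟫ • g1 t⟫ = ⟪g1 t, e⟫ * ⟪e, g1 t⟫ :=
        real_inner_smul_right _ _ _
      have hc : ⟪e, g1 t⟫ = ⟪g1 t, e⟫ := real_inner_comm _ _
      have hns : ‖⟪g1 t, e⟫ • g1 t‖ = |⟪g1 t, e⟫| * ‖g1 t‖ := by
        rw [norm_smul, Real.norm_eq_abs]
      rw [hw, hn, hsm, hc, hns, hspeed t ht, he, hPs]
      rw [mul_one, sq_abs]
      ring
    have h4 : ⟪g2 t, w⟫ * ⟪g2 t, w⟫ ≤ ⟪g2 t, g2 t⟫ * ⟪w, w⟫ :=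
      real_inner_mul_inner_self_le _ _
    rw [real_inner_self_eq_norm_sq, real_inner_self_eq_norm_sq] at h4
    have h5 : (P' t) ^ 2 ≤ ‖g2 t‖ ^ 2 * ‖w‖ ^ 2 := by
      rw [← h1]; nlinarith [h4]
    have h6 := hnorm2 t ht
    have h7 : (0:ℝ) ≤ ‖w‖ ^ 2 := sq_nonneg _
    calc (P' t) ^ 2 ≤ ‖g2 t‖ ^ 2 * ‖w‖ ^ 2 := h5
      _ ≤ K ^ 2 * ‖w‖ ^ 2 := mul_le_mul_of_nonneg_right h6 h7
      _ = K ^ 2 * (1 - (P t) ^ 2) := by rw [h2]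
  have hP1 : P t₀ = 1 := by
    rw [hPs, ← he', real_inner_self_eq_norm_sq, he]; norm_num
  have hKT : K * (T - t₀) = π / 2 := by
    rw [hK, ht₀, hT]; field_simp; ring
  -- right half
  have cosR : ∀ t ∈ Icc t₀ T, Real.cos (K * (t - t₀)) ≤ P t := by
    apply cos_comparison hKpos
    · intro t ht
      exact (hPd t ⟨le_trans ht₀I.1 ht.1, ht.2⟩).mono (Icc_subset_Icc ht₀I.1 le_rfl)
    · exact hP1
    · intro t ht
      exact hPbound t ⟨le_trans ht₀I.1 ht.1, ht.2⟩
    · rw [hKT]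
  -- left half
  have cosL : ∀ s ∈ Icc 0 t₀, Real.cos (K * (s - 0)) ≤ P (t₀ - s) := by
    apply cos_comparison (P := fun s => P (t₀ - s)) (P' := fun s => -(P' (t₀ - s))) hKpos
    · intro s hs
      have hmem : t₀ - s ∈ Icc 0 T := ⟨by linarith [hs.2], by linarith [hs.1, ht₀I.2]⟩
      have hin : HasDerivWithinAt (fun u : ℝ => t₀ - u) (-1) (Icc 0 t₀) s := by
        simpa using (hasDerivWithinAt_id s (Icc 0 t₀)).const_sub t₀
      have hmaps : MapsTo (fun u : ℝ => t₀ - u) (Icc 0 t₀) (Icc 0 T) := by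
        intro u hu
        exact ⟨by simp; linarith [hu.2], by simp; linarith [hu.1, ht₀I.2]⟩
      have hcomp := (hPd (t₀ - s) hmem).comp s hin hmaps
      exact hcomp.congr_deriv (by ring)
    · simp [hP1]
    · intro s hs
      have hmem : t₀ - s ∈ Icc 0 T := ⟨by linarith [hs.2], by linarith [hs.1, ht₀I.2]⟩
      have := hPbound (t₀ - s) hmem
      simpa using this
    · rw [sub_zero]
      rw [hK, ht₀, hT]
      have hq : (Real.sin r)⁻¹ * (π * Real.sin r / 2) = π / 2 := by
        field_simp
      rw [hq]
  -- pointwise comparison on all of [0, T]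
  have hcosAll : ∀ t ∈ Icc 0 T, Real.cos (K * (t - t₀)) ≤ P t := by
    intro t ht
    rcases le_total t t₀ with h | h
    · have h1 := cosL (t₀ - t) ⟨by linarith [ht.1], by linarith [ht.1]⟩
      have h2 : t₀ - (t₀ - t) = t := by ring
      rw [h2] at h1
      have h3 : K * (t - t₀) = -(K * (t₀ - t - 0)) := by ring
      rw [h3, Real.cos_neg]
      exact h1
    · exact cosR t ⟨h, ht.2⟩
  have hPcont : ContinuousOn P (Icc 0 T) := fun t ht => (hPd t ht).continuousWithinAt
  have hFd : ∀ t ∈ Icc 0 T, HasDerivWithinAt (fun u => ⟪γ u, e⟫) (P t) (Icc 0 T) t := by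
    intro t ht
    have h1 := (hd1 t ht).inner ℝ (hasDerivWithinAt_const t (Icc 0 T) e)
    simpa [hPs] using h1
  have hPint : IntervalIntegrable P MeasureTheory.volume 0 T := by
    apply ContinuousOn.intervalIntegrable
    rwa [uIcc_of_le hTpos.le]
  have hFTC : ∫ t in (0:ℝ)..T, P t = ⟪γ T, e⟫ - ⟪γ 0, e⟫ := by
    refine intervalIntegral.integral_eq_sub_of_hasDeriv_right_of_le
      (f := fun u => ⟪γ u, e⟫) hTpos.le ?_ ?_ ?_
    · exact hγ.continuousOn.inner continuousOn_const
    · intro x hx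
      have hxI : x ∈ Icc 0 T := ⟨hx.1.le, hx.2.le⟩
      exact ((hFd x hxI).hasDerivAt (Icc_mem_nhds hx.1 hx.2)).hasDerivWithinAt
    · exact hPint
  have hint : IntervalIntegrable (fun t => Real.cos (K * (t - t₀)))
      MeasureTheory.volume 0 T := by
    apply Continuous.intervalIntegrable
    fun_prop
  have hcosint : ∫ t in (0:ℝ)..T, Real.cos (K * (t - t₀)) = 2 * Real.sin r := by
    have hderivH : ∀ t ∈ uIcc (0:ℝ) T, HasDerivAt (fun u => Real.sin (K * (u - t₀)) / K)
        (Real.cos (K * (t - t₀))) t := by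
      intro t _
      have h1 : HasDerivAt (fun u : ℝ => K * (u - t₀)) K t := by
        simpa using ((hasDerivAt_id t).sub_const t₀).const_mul K
      have h2 := ((Real.hasDerivAt_sin (K * (t - t₀))).comp t h1).div_const K
      exact h2.congr_deriv (by field_simp)
    rw [intervalIntegral.integral_eq_sub_of_hasDerivAt hderivH hint]
    have e2 : K * (0 - t₀) = -(π / 2) := by
      rw [hK, ht₀, hT]; field_simp; ring
    rw [hKT, e2, Real.sin_neg, Real.sin_pi_div_two, hK]
    field_simp
    ring
  have hmono : (∫ t in (0:ℝ)..T, Real.cos (K * (t - t₀))) ≤ ∫ t in (0:ℝ)..T, P t :=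
    intervalIntegral.integral_mono_on hTpos.le hint hPint hcosAll
  rw [hcosint, hFTC] at hmono
  have hCS : ⟪γ T - γ 0, e⟫ ≤ ‖γ T - γ 0‖ := by
    have h1 := real_inner_le_norm (γ T - γ 0) e
    rwa [he, mul_one] at h1
  have hsub : ⟪γ T - γ 0, e⟫ = ⟪γ T, e⟫ - ⟪γ 0, e⟫ := inner_sub_left _ _ _
  have hnormge : 2 * Real.sin r ≤ ‖γ T - γ 0‖ := by
    rw [hsub] at hCS
    linarith
  have hnsq : ‖γ T - γ 0‖ ^ 2 = 2 - 2 * ⟪γ 0, γ T⟫ := by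
    have h1 := norm_sub_sq_real (γ T) (γ 0)
    have h2 : ⟪γ T, γ 0⟫ = ⟪γ 0, γ T⟫ := real_inner_comm _ _
    have h3 : ‖γ T‖ = 1 := hsphere T ⟨hTpos.le, le_rfl⟩
    have h4 : ‖γ 0‖ = 1 := hsphere 0 ⟨le_rfl, hTpos.le⟩
    rw [h1, h2, h3, h4]; ring
  have hsq : (2 * Real.sin r) ^ 2 ≤ ‖γ T - γ 0‖ ^ 2 :=
    pow_le_pow_left₀ (by positivity) hnormge 2
  have hc2r : Real.cos (2 * r) = 1 - 2 * Real.sin r ^ 2 := by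
    have h5 := Real.sin_sq_add_cos_sq r
    rw [Real.cos_two_mul]; linarith
  rw [hc2r]
  nlinarith [hsq, hnsq]
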